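/- Let ℓ ∈ ℕ and let q̄(w) = Σ_{k=0}^{ℓ} binom(−1/2, k)·(−2)^k·w^{ℓ−k}. Then for every α ∈ ℂ, the two-variable polynomial α^{2ℓ+1}·(w − 2)·q̄(w)² evaluated at w = z/α, i.e. the polynomial B_α(z) = (z − 2α)·(α^ℓ·q̄(z/α))² (which is a polynomial in z with coefficients polynomial in α), satisfies: B_α(z) − z^{2ℓ+1} is a polynomial in z of degree at most ℓ+1. -/

import Mathlib

open Polynomial

/-- The generalized binomial coefficient `binom(−1/2, k)`. -/
noncomputable def gbinom (k : ℕ) : ℂ :=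
  (∏ j ∈ Finset.range k, ((-1/2 : ℂ) - j)) / (Nat.factorial k)

/-- `α^ℓ q̄(z/α) = Σ_{k=0}^{ℓ} binom(−1/2,k)(−2)^k α^k z^{ℓ−k}` as a polynomial in `z`
(outer variable) with coefficients polynomials in `α` (inner variable). -/
noncomputable def qbarScaled (ℓ : ℕ) : Polynomial (Polynomial ℂ) :=
  ∑ k ∈ Finset.range (ℓ + 1),
    C (Polynomial.C (gbinom k * (-2 : ℂ) ^ k) * Polynomial.X ^ k) * X ^ (ℓ - k)

/-- `B_α(z) = (z − 2α) (α^ℓ q̄(z/α))²` as a polynomial in `z` over `ℂ[α]`. -/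
noncomputable def Bpoly (ℓ : ℕ) : Polynomial (Polynomial ℂ) :=
  (X - C (Polynomial.C 2 * Polynomial.X)) * (qbarScaled ℓ) ^ 2

open Finset

lemma desc_smeval_prod (r : ℂ) (n : ℕ) :
    (descPochhammer ℤ n).smeval r = ∏ j ∈ range n, (r - j) := by
  induction n with
  | zero => simp [descPochhammer_zero, Polynomial.smeval_one]
  | succ n ih =>
      rw [descPochhammer_succ_right, Polynomial.smeval_mul, ih, prod_range_succ,
        Polynomial.smeval_sub, Polynomial.smeval_X, Polynomial.smeval_natCast]
      ring

lemma gbinom_eq (k : ℕ) : gbinom k = Ring.choose (-1/2 : ℂ) k := by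
  have h := Ring.descPochhammer_eq_factorial_smul_choose (-1/2 : ℂ) k
  rw [desc_smeval_prod] at h
  rw [gbinom, h, nsmul_eq_mul]
  field_simp [Nat.factorial_ne_zero]

lemma choose_neg_one (m : ℕ) : Ring.choose (-1 : ℂ) m = (-1) ^ m := by
  have hp : (∏ j ∈ range m, ((-1 : ℂ) - j)) = (-1) ^ m * (Nat.factorial m) := by
    induction m with
    | zero => simp
    | succ n ih =>
        rw [prod_range_succ, ih, Nat.factorial_succ]
        push_cast
        ring
  have h := Ring.descPochhammer_eq_factorial_smul_choose (-1 : ℂ) m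
  rw [desc_smeval_prod, hp, nsmul_eq_mul, mul_comm ((-1) ^ m : ℂ)] at h
  have hf : (Nat.factorial m : ℂ) ≠ 0 := by exact_mod_cast Nat.factorial_ne_zero m
  exact (mul_left_cancel₀ hf h).symm

lemma gbinom_conv (m : ℕ) :
    ∑ ij ∈ antidiagonal m, gbinom ij.1 * gbinom ij.2 = (-1) ^ m := by
  have h := Ring.add_choose_eq (r := (-1/2 : ℂ)) (s := (-1/2 : ℂ)) m (Commute.all _ _)
  rw [show ((-1/2 : ℂ) + (-1/2)) = -1 by norm_num, choose_neg_one] at h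
  rw [h]
  exact sum_congr rfl fun ij _ => by rw [gbinom_eq, gbinom_eq]

noncomputable def cc (k : ℕ) : ℂ := gbinom k * (-2 : ℂ) ^ k

lemma cc_conv (m : ℕ) :
    ∑ ij ∈ antidiagonal m, cc ij.1 * cc ij.2 = 2 ^ m := by
  have : ∀ ij ∈ antidiagonal m, cc ij.1 * cc ij.2
      = (gbinom ij.1 * gbinom ij.2) * (-2 : ℂ) ^ m := by
    intro ij hij
    rw [Finset.HasAntidiagonal.mem_antidiagonal] at hij
    rw [cc, cc, ← hij, pow_add]
    ring
  rw [sum_congr rfl this, ← sum_mul, gbinom_conv,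
    show ((-2 : ℂ)) = (-1) * 2 by ring, mul_pow, ← mul_assoc, ← mul_pow]
  norm_num

lemma coeffQ (ℓ n : ℕ) :
    (qbarScaled ℓ).coeff n =
      if n ≤ ℓ then Polynomial.C (cc (ℓ - n)) * Polynomial.X ^ (ℓ - n) else 0 := by
  rw [qbarScaled, finset_sum_coeff]
  have hterm : ∀ k, (C (Polynomial.C (gbinom k * (-2 : ℂ) ^ k) * Polynomial.X ^ k)
      * X ^ (ℓ - k)).coeff n
      = if n = ℓ - k then Polynomial.C (cc k) * Polynomial.X ^ k else 0 := by
    intro k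
    rw [coeff_C_mul, coeff_X_pow, cc]
    split <;> simp
  simp only [hterm]
  by_cases h : n ≤ ℓ
  · rw [Finset.sum_eq_single (ℓ - n)]
    · simp [Nat.sub_sub_self h, h]
    · intro k hk hne
      rw [mem_range] at hk
      have : ¬ (n = ℓ - k) := by omega
      simp [this]
    · intro hmem
      exact absurd (mem_range.mpr (by omega)) hmem
  · rw [if_neg h]
    apply Finset.sum_eq_zero
    intro k hk
    rw [mem_range] at hk
    have : ¬ (n = ℓ - k) := by omega
    simp [this]

lemma coeffQ2 (ℓ m : ℕ) (h1 : ℓ ≤ m) (h2 : m ≤ 2 * ℓ) :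
    (qbarScaled ℓ ^ 2).coeff m
      = Polynomial.C ((2 : ℂ) ^ (2 * ℓ - m)) * Polynomial.X ^ (2 * ℓ - m) := by
  rw [sq, coeff_mul]
  have key : ∑ ij ∈ antidiagonal m, (qbarScaled ℓ).coeff ij.1 * (qbarScaled ℓ).coeff ij.2
      = ∑ ij ∈ antidiagonal (2 * ℓ - m),
          Polynomial.C (cc ij.1 * cc ij.2) * Polynomial.X ^ (2 * ℓ - m) := by
    rw [← Finset.sum_filter_of_ne
      (p := fun ij : ℕ × ℕ => ij.1 ≤ ℓ ∧ ij.2 ≤ ℓ)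
      (by
        intro ij hij hne
        by_contra hc
        push_neg at hc
        rcases Nat.lt_or_ge ℓ ij.1 with h | h
        · exact hne (by rw [coeffQ, if_neg (Nat.not_le.mpr h), zero_mul])
        · have h2' : ℓ < ij.2 := by
            rcases Nat.lt_or_ge ℓ ij.2 with h' | h'
            · exact h'
            · exact absurd h' (by omega)
          exact hne (by rw [coeffQ ℓ ij.2, if_neg (Nat.not_le.mpr h2'), mul_zero]))]
    refine Finset.sum_nbij' (fun ij => (ℓ - ij.1, ℓ - ij.2)) (fun ij => (ℓ - ij.1, ℓ - ij.2))
      ?_ ?_ ?_ ?_ ?_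
    · intro a ha
      obtain ⟨x, y⟩ := a
      simp only [mem_filter, Finset.HasAntidiagonal.mem_antidiagonal] at ha
      rw [Finset.HasAntidiagonal.mem_antidiagonal]
      simp only
      omega
    · intro b hb
      obtain ⟨x, y⟩ := b
      rw [Finset.HasAntidiagonal.mem_antidiagonal] at hb
      simp only [mem_filter, Finset.HasAntidiagonal.mem_antidiagonal]
      omega
    · intro a ha
      obtain ⟨x, y⟩ := a
      simp only [mem_filter, Finset.HasAntidiagonal.mem_antidiagonal] at ha
      simp only [Prod.mk.injEq]
      constructor <;> omega
    · intro b hb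
      obtain ⟨x, y⟩ := b
      rw [Finset.HasAntidiagonal.mem_antidiagonal] at hb
      simp only [Prod.mk.injEq]
      constructor <;> omega
    · intro a ha
      simp only [mem_filter, Finset.HasAntidiagonal.mem_antidiagonal] at ha
      rw [coeffQ, coeffQ, if_pos ha.2.1, if_pos ha.2.2]
      have h3 : (ℓ - a.1) + (ℓ - a.2) = 2 * ℓ - m := by omega
      calc Polynomial.C (cc (ℓ - a.1)) * Polynomial.X ^ (ℓ - a.1)
            * (Polynomial.C (cc (ℓ - a.2)) * Polynomial.X ^ (ℓ - a.2))
          = Polynomial.C (cc (ℓ - a.1) * cc (ℓ - a.2))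
            * Polynomial.X ^ ((ℓ - a.1) + (ℓ - a.2)) := by rw [pow_add, map_mul]; ring
        _ = _ := by rw [h3]
  rw [key, ← Finset.sum_mul, ← map_sum, cc_conv]

lemma coeffQ2' (ℓ m : ℕ) (h : 2 * ℓ < m) : (qbarScaled ℓ ^ 2).coeff m = 0 := by
  rw [sq, coeff_mul]
  apply Finset.sum_eq_zero
  intro ij hij
  rw [Finset.HasAntidiagonal.mem_antidiagonal] at hij
  rcases Nat.lt_or_ge ℓ ij.1 with h1 | h1
  · rw [coeffQ, if_neg (Nat.not_le.mpr h1), zero_mul]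
  · have h2 : ℓ < ij.2 := by omega
    rw [coeffQ ℓ ij.2, if_neg (Nat.not_le.mpr h2), mul_zero]

theorem stmt6 (ℓ : ℕ) :
    (Bpoly ℓ - X ^ (2 * ℓ + 1)).degree ≤ ((ℓ + 1 : ℕ) : WithBot ℕ) := by
  rw [degree_le_iff_coeff_zero]
  intro n hn
  rw [Nat.cast_lt] at hn
  obtain ⟨n, rfl⟩ : ∃ k, n = k + 1 := ⟨n - 1, by omega⟩
  have hn' : ℓ + 1 ≤ n := by omega
  rw [coeff_sub, coeff_X_pow, Bpoly, sub_mul, coeff_sub, coeff_X_mul, coeff_C_mul]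
  rcases Nat.lt_or_ge (2 * ℓ) n with hbig | hsmall
  · -- n > 2ℓ, so n+1 > 2ℓ+1
    rw [coeffQ2' ℓ n hbig, coeffQ2' ℓ (n + 1) (by omega), if_neg (by omega)]
    simp
  · rcases Nat.lt_or_ge n (2 * ℓ) with hmid | htop
    · -- ℓ+1 ≤ n < 2ℓ
      rw [coeffQ2 ℓ n (by omega) (by omega), coeffQ2 ℓ (n + 1) (by omega) (by omega),
        if_neg (by omega)]
      have h4 : 2 * ℓ - n = (2 * ℓ - (n + 1)) + 1 := by omega
      rw [h4, pow_succ, pow_succ, map_mul]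
      ring
    · -- n = 2ℓ
      have hn2 : n = 2 * ℓ := by omega
      subst hn2
      rw [coeffQ2 ℓ (2 * ℓ) (by omega) le_rfl, coeffQ2' ℓ (2 * ℓ + 1) (by omega),
        if_pos rfl]
      simp
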